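/- arXiv:0812.0836 — 4 statements merged into one kernel-verified Lean document; each statement's English description precedes it below -/
import Mathlib

section
/- Every uncountable analytic subset of ℝ contains a Cantor set that is linearly independent over ℚ. -/
/-- A Cantor set: a nonempty compact subset of `ℝ` with empty interior and
no isolated points. -/
def IsCantorSet (K : Set ℝ) : Prop :=
  K.Nonempty ∧ IsCompact K ∧ interior K = ∅ ∧ ∀ x ∈ K, AccPt x (Filter.principal K)

open Set Filter Metric Topology PiNat Function

section Cyl
variable {E : ℕ → Type*} [∀ n, TopologicalSpace (E n)] [∀ n, DiscreteTopology (E n)]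

lemma stmt7_cylinder_mem_nhds (x : ∀ n, E n) (n : ℕ) : cylinder x n ∈ 𝓝 x :=
  (isOpen_cylinder E x n).mem_nhds (self_mem_cylinder x n)

lemma stmt7_exists_cylinder_subset {x : ∀ n, E n} {U : Set (∀ n, E n)} (h : U ∈ 𝓝 x) :
    ∃ n, cylinder x n ⊆ U := by
  obtain ⟨V, hVU, hVo, hxV⟩ := mem_nhds_iff.1 h
  obtain ⟨t, ⟨y, n, rfl⟩, hxt, htV⟩ :=
    (isTopologicalBasis_cylinders E).exists_subset_of_mem_open hxV hVo
  refine ⟨n, ?_⟩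
  rw [mem_cylinder_iff_eq] at hxt
  rw [hxt]
  exact htV.trans hVU
end Cyl

namespace Stmt7

variable (f : (ℕ → ℕ) → ℝ)

/-- A cylinder is *big* if its image under `f` is uncountable. -/
def Big (p : (ℕ → ℕ) × ℕ) : Prop := ¬ (f '' cylinder p.1 p.2).Countable

lemma big_anti {x : ℕ → ℕ} {m n : ℕ} (h : m ≤ n) (hb : Big f (x, n)) : Big f (x, m) :=
  fun hc => hb (hc.mono (image_mono (cylinder_anti x h)))

/-- Lemma A : a big cylinder contains two hereditarily big points with distinct images. -/
lemma lemA {p : (ℕ → ℕ) × ℕ} (hp : Big f p) :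
    ∃ y z, y ∈ cylinder p.1 p.2 ∧ z ∈ cylinder p.1 p.2 ∧
      (∀ k, Big f (y, k)) ∧ (∀ k, Big f (z, k)) ∧ f y ≠ f z := by
  classical
  set Bad : Set ℝ :=
    ⋃ (s : List ℕ) (_ : (f '' {w : ℕ → ℕ | res w s.length = s}).Countable),
      f '' {w : ℕ → ℕ | res w s.length = s} with hBad
  have hBadc : Bad.Countable := by
    refine Set.countable_iUnion fun s => ?_
    by_cases h : (f '' {w : ℕ → ℕ | res w s.length = s}).Countable
    · simpa [h]
    · simp [h]
  have hkey : ∀ w : ℕ → ℕ, f w ∉ Bad → ∀ k, Big f (w, k) := by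
    intro w hw k hc
    apply hw
    refine mem_iUnion.2 ⟨res w k, ?_⟩
    have hcyl : {z : ℕ → ℕ | res z (res w k).length = res w k} = cylinder w k := by
      rw [res_length]
      exact (cylinder_eq_res w k).symm
    rw [hcyl]
    exact mem_iUnion.2 ⟨hc, mem_image_of_mem f (self_mem_cylinder w k)⟩
  have hS : ¬ (f '' cylinder p.1 p.2 \ Bad).Countable := by
    intro hc
    exact hp (((hc.union hBadc)).mono (by intro u hu; by_cases h : u ∈ Bad <;> simp [h, hu]))
  have hnt : (f '' cylinder p.1 p.2 \ Bad).Nontrivial := by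
    by_contra h
    exact hS (Set.not_nontrivial_iff.1 h).countable
  obtain ⟨u, hu, v, hv, huv⟩ := hnt
  obtain ⟨y, hy, rfl⟩ := hu.1
  obtain ⟨z, hz, rfl⟩ := hv.1
  exact ⟨y, z, hy, hz, hkey y hu.2, hkey z hv.2, huv⟩

end Stmt7

namespace Stmt7

variable (f : (ℕ → ℕ) → ℝ)

/-- Lemma B : splitting a big cylinder into two big sub-cylinders with small,
disjoint image neighborhoods. -/
lemma lemB (hf : Continuous f) {p : (ℕ → ℕ) × ℕ} (hp : Big f p) {ε : ℝ} (hε : 0 < ε) :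
    ∃ (q : Bool → (ℕ → ℕ) × ℕ) (δ : ℝ), 0 < δ ∧ δ ≤ ε ∧
      (∀ b, (q b).1 ∈ cylinder p.1 p.2 ∧ p.2 < (q b).2 ∧ Big f (q b) ∧
        f '' cylinder (q b).1 (q b).2 ⊆ closedBall (f (q b).1) δ) ∧
      Disjoint (closedBall (f (q false).1) δ) (closedBall (f (q true).1) δ) := by
  obtain ⟨y, z, hy, hz, hby, hbz, hyz⟩ := lemA f hp
  set d := dist (f y) (f z) with hd
  have hdpos : 0 < d := dist_pos.2 hyz
  set δ := min ε (d/3) with hδ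
  have hδpos : 0 < δ := lt_min hε (by linarith)
  have hsub : ∀ w : ℕ → ℕ, ∃ m, p.2 < m ∧ f '' cylinder w m ⊆ closedBall (f w) δ := by
    intro w
    have : f ⁻¹' (ball (f w) δ) ∈ 𝓝 w :=
      hf.continuousAt (ball_mem_nhds _ hδpos)
    obtain ⟨n, hn⟩ := stmt7_exists_cylinder_subset this
    refine ⟨max n (p.2 + 1), lt_of_lt_of_le (Nat.lt_succ_self _) (le_max_right _ _), ?_⟩
    rintro u ⟨w', hw', rfl⟩
    exact ball_subset_closedBall (hn (cylinder_anti w (le_max_left _ _) hw'))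
  obtain ⟨my, hmy, hsy⟩ := hsub y
  obtain ⟨mz, hmz, hsz⟩ := hsub z
  refine ⟨fun b => if b then (z, mz) else (y, my), δ, hδpos, min_le_left _ _, ?_, ?_⟩
  · intro b
    cases b
    · exact ⟨hy, hmy, hby my, hsy⟩
    · exact ⟨hz, hmz, hbz mz, hsz⟩
  · simp only [if_true, if_false, Bool.false_eq_true]
    apply closedBall_disjoint_closedBall
    calc δ + δ ≤ d/3 + d/3 := by
          have := min_le_right ε (d/3); linarith [min_le_right ε (d/3)]
      _ < d := by linarith

end Stmt7

namespace Stmt7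

variable (f : (ℕ → ℕ) → ℝ) (hf : Continuous f)

open Classical in
/-- One splitting step (with junk values when hypotheses fail). -/
noncomputable def step (p : (ℕ → ℕ) × ℕ) (ε : ℝ) : (Bool → (ℕ → ℕ) × ℕ) × ℝ :=
  if h : Big f p ∧ 0 < ε then
    ⟨(lemB f hf h.1 h.2).choose, (lemB f hf h.1 h.2).choose_spec.choose⟩
  else ⟨fun _ => p, 1⟩

lemma step_spec {p : (ℕ → ℕ) × ℕ} (hp : Big f p) {ε : ℝ} (hε : 0 < ε) :
    0 < (step f hf p ε).2 ∧ (step f hf p ε).2 ≤ ε ∧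
      (∀ b, ((step f hf p ε).1 b).1 ∈ cylinder p.1 p.2 ∧ p.2 < ((step f hf p ε).1 b).2 ∧
        Big f ((step f hf p ε).1 b) ∧
        f '' cylinder ((step f hf p ε).1 b).1 ((step f hf p ε).1 b).2 ⊆
          closedBall (f ((step f hf p ε).1 b).1) (step f hf p ε).2) ∧
      Disjoint (closedBall (f ((step f hf p ε).1 false).1) (step f hf p ε).2)
        (closedBall (f ((step f hf p ε).1 true).1) (step f hf p ε).2) := by
  have h : Big f p ∧ 0 < ε := ⟨hp, hε⟩
  simp only [step, dif_pos h]
  exact (lemB f hf h.1 h.2).choose_spec.choose_spec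

/-- The tree of big cylinders (head of the list is the most recent bit). -/
noncomputable def node : List Bool → (ℕ → ℕ) × ℕ
  | [] => (fun _ => 0, 0)
  | b :: σ => (step f hf (node σ) ((1/2 : ℝ)^(σ.length + 1))).1 b

/-- The finite branch of `a` of length `n`, most recent bit first. -/
def br (a : ℕ → Bool) : ℕ → List Bool
  | 0 => []
  | n + 1 => a n :: br a n

lemma br_length (a : ℕ → Bool) (n : ℕ) : (br a n).length = n := by
  induction n with
  | zero => rfl
  | succ n ih => simp [br, ih]

lemma br_eq_of {a a' : ℕ → Bool} : ∀ {n : ℕ}, (∀ i < n, a' i = a i) → br a' n = br a n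
  | 0, _ => rfl
  | n + 1, h => by
    simp only [br, List.cons_eq_cons]
    exact ⟨h n (Nat.lt_succ_self n), br_eq_of fun i hi => h i (hi.trans (Nat.lt_succ_self n))⟩

variable (hunc : ¬ (range f).Countable)

include hunc

lemma big_node : ∀ σ : List Bool, Big f (node f hf σ) := by
  intro σ
  induction σ with
  | nil =>
    simp only [node, Big, cylinder_zero, image_univ]
    exact hunc
  | cons b σ ih =>
    have := (step_spec f hf ih (ε := (1/2 : ℝ)^(σ.length + 1)) (by positivity)).2.2.1 b
    exact this.2.2.1

lemma node_spec (σ : List Bool) :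
    0 < (step f hf (node f hf σ) ((1/2 : ℝ)^(σ.length + 1))).2 ∧
    (step f hf (node f hf σ) ((1/2 : ℝ)^(σ.length + 1))).2 ≤ (1/2 : ℝ)^(σ.length + 1) ∧
      (∀ b, (node f hf (b :: σ)).1 ∈ cylinder (node f hf σ).1 (node f hf σ).2 ∧
        (node f hf σ).2 < (node f hf (b :: σ)).2 ∧
        f '' cylinder (node f hf (b :: σ)).1 (node f hf (b :: σ)).2 ⊆
          closedBall (f (node f hf (b :: σ)).1)
            (step f hf (node f hf σ) ((1/2 : ℝ)^(σ.length + 1))).2) ∧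
      Disjoint
        (closedBall (f (node f hf (false :: σ)).1)
          (step f hf (node f hf σ) ((1/2 : ℝ)^(σ.length + 1))).2)
        (closedBall (f (node f hf (true :: σ)).1)
          (step f hf (node f hf σ) ((1/2 : ℝ)^(σ.length + 1))).2) := by
  have h := step_spec f hf (big_node f hf hunc σ) (ε := (1/2 : ℝ)^(σ.length + 1)) (by positivity)
  simp only [node]
  exact ⟨h.1, h.2.1, fun b => ⟨(h.2.2.1 b).1, (h.2.2.1 b).2.1, (h.2.2.1 b).2.2.2⟩, h.2.2.2⟩

lemma dpt_strict (a : ℕ → Bool) (n : ℕ) :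
    (node f hf (br a n)).2 < (node f hf (br a (n+1))).2 :=
  ((node_spec f hf hunc (br a n)).2.2.1 (a n)).2.1

lemma dpt_mono (a : ℕ → Bool) {n m : ℕ} (h : n ≤ m) :
    (node f hf (br a n)).2 ≤ (node f hf (br a m)).2 := by
  induction m with
  | zero => simp [Nat.le_zero.1 h]
  | succ m ih =>
    rcases Nat.le_succ_iff.1 h with h' | h'
    · exact (ih h').trans (dpt_strict f hf hunc a m).le
    · simp [h']

lemma le_dpt (a : ℕ → Bool) (n : ℕ) : n ≤ (node f hf (br a n)).2 := by
  induction n with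
  | zero => exact Nat.zero_le _
  | succ n ih => exact Nat.lt_of_le_of_lt ih (dpt_strict f hf hunc a n)

lemma stab (a : ℕ → Bool) {n m : ℕ} (h : n ≤ m) :
    ∀ i < (node f hf (br a n)).2, (node f hf (br a m)).1 i = (node f hf (br a n)).1 i := by
  induction m with
  | zero => intro i hi; rw [Nat.le_zero.1 h]
  | succ m ih =>
    rcases Nat.le_succ_iff.1 h with h' | h'
    · intro i hi
      have hmem := ((node_spec f hf hunc (br a m)).2.2.1 (a m)).1
      have heq : (node f hf (br a (m+1))).1 i = (node f hf (br a m)).1 i :=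
        hmem i (lt_of_lt_of_le hi (dpt_mono f hf hunc a h'))
      rw [heq, ih h' i hi]
    · intro i hi; rw [h']

/-- The branch limit point. -/
noncomputable def lim (a : ℕ → Bool) : ℕ → ℕ := fun k => (node f hf (br a (k+1))).1 k

lemma lim_mem (a : ℕ → Bool) (n : ℕ) :
    lim f hf a ∈ cylinder (node f hf (br a n)).1 (node f hf (br a n)).2 := by
  intro i hi
  show (node f hf (br a (i+1))).1 i = (node f hf (br a n)).1 i
  rcases le_total (i+1) n with h | h
  · exact (stab f hf hunc a h i (lt_of_lt_of_le (Nat.lt_succ_self i)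
      (le_dpt f hf hunc a (i+1)))).symm
  · exact stab f hf hunc a h i hi

/-- The embedding of Cantor space. -/
noncomputable def g (a : ℕ → Bool) : ℝ := f (lim f hf a)

include hf in
lemma g_mem_range (a : ℕ → Bool) : g f hf a ∈ range f := mem_range_self _

lemma g_mem_ball (a : ℕ → Bool) (n : ℕ) :
    g f hf a ∈ closedBall (f (node f hf (a n :: br a n)).1)
      (step f hf (node f hf (br a n)) ((1/2 : ℝ)^((br a n).length + 1))).2 := by
  have hspec := ((node_spec f hf hunc (br a n)).2.2.1 (a n)).2.2
  exact hspec (mem_image_of_mem f (lim_mem f hf hunc a (n+1)))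

lemma dist_g_le {a a' : ℕ → Bool} (n : ℕ) (h : ∀ i < n + 1, a' i = a i) :
    dist (g f hf a') (g f hf a) ≤ (1/2 : ℝ)^n := by
  have hbr : br a' n = br a n := br_eq_of fun i hi => h i (hi.trans (Nat.lt_succ_self n))
  have h1 := g_mem_ball f hf hunc a n
  have h2 := g_mem_ball f hf hunc a' n
  rw [hbr, h n (Nat.lt_succ_self n)] at h2
  have hδ := ((node_spec f hf hunc (br a n)).2.1).trans_eq
    (by rw [br_length] : ((1/2 : ℝ))^((br a n).length + 1) = (1/2 : ℝ)^(n+1))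
  calc dist (g f hf a') (g f hf a)
      ≤ dist (g f hf a') (f (node f hf (a n :: br a n)).1)
        + dist (f (node f hf (a n :: br a n)).1) (g f hf a) := dist_triangle _ _ _
    _ ≤ (1/2 : ℝ)^(n+1) + (1/2 : ℝ)^(n+1) := by
        refine add_le_add (le_trans (mem_closedBall.1 h2) hδ) ?_
        rw [dist_comm]
        exact le_trans (mem_closedBall.1 h1) hδ
    _ = (1/2 : ℝ)^n := by ring

lemma g_injective : Injective (g f hf) := by
  intro a a' hgaa
  by_contra hne
  have hex : ∃ k, a k ≠ a' k := by
    by_contra hc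
    push_neg at hc
    exact hne (funext hc)
  classical
  set k := Nat.find hex with hk
  have hkne : a k ≠ a' k := Nat.find_spec hex
  have hmin : ∀ i < k, a i = a' i := fun i hi => by
    have := Nat.find_min hex hi
    simpa using this
  have hbr : br a' k = br a k := br_eq_of fun i hi => (hmin i hi).symm
  have h1 := g_mem_ball f hf hunc a k
  have h2 := g_mem_ball f hf hunc a' k
  rw [hbr] at h2
  have hdisj := (node_spec f hf hunc (br a k)).2.2.2
  cases hak : a k with
  | false =>
    have hak' : a' k = true := by
      cases hak' : a' k
      · exact absurd (hak.trans hak'.symm) hkne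
      · rfl
    rw [hak] at h1; rw [hak'] at h2; rw [hgaa] at h1
    exact hdisj.ne_of_mem h1 h2 rfl
  | true =>
    have hak' : a' k = false := by
      cases hak' : a' k
      · rfl
      · exact absurd (hak.trans hak'.symm) hkne
    rw [hak] at h1; rw [hak'] at h2; rw [hgaa] at h1
    exact hdisj.ne_of_mem h2 h1 rfl

lemma g_continuous : Continuous (g f hf) := by
  rw [continuous_iff_continuousAt]
  intro a
  rw [ContinuousAt, Metric.tendsto_nhds]
  intro ε hε
  obtain ⟨n, hn⟩ := exists_pow_lt_of_lt_one hε (by norm_num : (1/2 : ℝ) < 1)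
  filter_upwards [stmt7_cylinder_mem_nhds a (n+1)] with a' ha'
  exact lt_of_le_of_lt (dist_g_le f hf hunc n fun i hi => ha' i hi) hn

end Stmt7

/-- Stage 1 : every uncountable analytic subset of ℝ receives a continuous
injection of Cantor space. -/
theorem stmt7_stage1 (A : Set ℝ) (hA : MeasureTheory.AnalyticSet A) (hunc : ¬ A.Countable) :
    ∃ g : (ℕ → Bool) → ℝ, Continuous g ∧ Injective g ∧ range g ⊆ A := by
  rw [MeasureTheory.AnalyticSet] at hA
  rcases hA with rfl | ⟨f, hf, rfl⟩
  · exact absurd Set.countable_empty hunc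
  · refine ⟨Stmt7.g f hf, Stmt7.g_continuous f hf hunc, Stmt7.g_injective f hf hunc, ?_⟩
    rintro x ⟨a, rfl⟩
    exact Stmt7.g_mem_range f hf hunc a

/-- Stage 2 : every uncountable analytic subset of ℝ contains a nonempty
compact perfect set. -/
theorem stmt7_stage2 (A : Set ℝ) (hA : MeasureTheory.AnalyticSet A) (hunc : ¬ A.Countable) :
    ∃ P : Set ℝ, P ⊆ A ∧ IsCompact P ∧ Perfect P ∧ P.Nonempty := by
  obtain ⟨g, hgc, hgi, hgr⟩ := stmt7_stage1 A hA hunc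
  refine ⟨range g, hgr, isCompact_range hgc, ⟨(isCompact_range hgc).isClosed, ?_⟩,
    range_nonempty _⟩
  rintro x ⟨a, rfl⟩
  rw [accPt_iff_nhds]
  intro U hU
  obtain ⟨n, hn⟩ := stmt7_exists_cylinder_subset (hgc.continuousAt (x := a) hU)
  set a' : ℕ → Bool := fun i => if i < n then a i else !(a i) with ha'
  have ha'mem : a' ∈ cylinder a n := fun i hi => by simp [ha', hi]
  have ha'ne : a' ≠ a := fun h => by
    have := congrFun h n
    simp [ha'] at this
  exact ⟨g a', ⟨hn ha'mem, mem_range_self _⟩, hgi.ne ha'ne⟩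


namespace Stage3

/-- Shrink a finite family of perfect sets to defeat one integer linear constraint. -/
lemma shrink_one {ι : Type*} [Fintype ι] (D : ι → Set ℝ)
    (hD : ∀ i, Perfect (D i) ∧ (D i).Nonempty) (ε : ι → ℤ) (hε : ε ≠ 0) :
    ∃ D' : ι → Set ℝ,
      (∀ i, Perfect (D' i) ∧ (D' i).Nonempty ∧ D' i ⊆ D i) ∧
      ∀ x : ι → ℝ, (∀ i, x i ∈ D' i) → ∑ i, (ε i : ℝ) * x i ≠ 0 := by
  classical
  obtain ⟨i₀, hi₀⟩ : ∃ i, ε i ≠ 0 := by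
    by_contra h
    push_neg at h
    exact hε (funext h)
  -- choose a point in each set
  have hpt : ∀ i, ∃ p, p ∈ D i := fun i => (hD i).2
  choose p hp using hpt
  -- two distinct points in D i₀
  obtain ⟨w, hw, hwne⟩ : ∃ w ∈ D i₀, w ≠ p i₀ := by
    have hacc := (hD i₀).1.acc _ (hp i₀)
    rw [accPt_iff_nhds] at hacc
    obtain ⟨w, ⟨_, hw⟩, hwne⟩ := hacc univ univ_mem
    exact ⟨w, hw, hwne⟩
  -- one of the two candidate tuples has nonzero sum
  obtain ⟨x, hx, hS⟩ : ∃ x : ι → ℝ, (∀ i, x i ∈ D i) ∧ ∑ i, (ε i : ℝ) * x i ≠ 0 := by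
    by_contra h
    push_neg at h
    have h1 := h p hp
    have h2 := h (Function.update p i₀ w) (fun i => by
      rcases eq_or_ne i i₀ with rfl | hne
      · simpa using hw
      · simpa [Function.update_of_ne hne] using hp i)
    have : ∑ i, (ε i : ℝ) * Function.update p i₀ w i - ∑ i, (ε i : ℝ) * p i = 0 := by
      rw [h1, h2]; ring
    rw [← Finset.sum_sub_distrib] at this
    have hzero : ∀ i ∈ Finset.univ, i ∉ ({i₀} : Finset ι) →
        (ε i : ℝ) * Function.update p i₀ w i - (ε i : ℝ) * p i = 0 := by
      intro i _ hi
      rw [Function.update_of_ne (by simpa using hi)]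
      ring
    rw [← Finset.sum_subset (Finset.subset_univ {i₀}) hzero] at this
    simp only [Finset.sum_singleton, Function.update_self] at this
    have hkey : (ε i₀ : ℝ) * (w - p i₀) = 0 := by linarith
    rcases mul_eq_zero.1 hkey with h' | h'
    · exact hi₀ (by exact_mod_cast h')
    · exact hwne (by linarith)
  set S := ∑ i, (ε i : ℝ) * x i with hSdef
  set W : ℝ := (∑ i, |(ε i : ℝ)|) + 1 with hW
  have hWpos : 0 < W := by
    have : (0:ℝ) ≤ ∑ i, |(ε i : ℝ)| := Finset.sum_nonneg fun i _ => abs_nonneg _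
    linarith
  set δ : ℝ := |S| / (2 * W) with hδdef
  have hδpos : 0 < δ := by
    apply div_pos (abs_pos.2 hS)
    linarith
  refine ⟨fun i => closure (ball (x i) δ ∩ D i), fun i => ?_, ?_⟩
  · have h1 := (hD i).1.closure_nhds_inter (x i) (hx i) (mem_ball_self hδpos) isOpen_ball
    exact ⟨h1.1, h1.2, closure_minimal inter_subset_right (hD i).1.closed⟩
  · intro y hy
    have hyd : ∀ i, |y i - x i| ≤ δ := by
      intro i
      have : y i ∈ closedBall (x i) δ :=
        closure_minimal (inter_subset_left.trans ball_subset_closedBall) isClosed_closedBall (hy i)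
      simpa [Real.dist_eq, mem_closedBall] using this
    intro hy0
    have hdiff : |S - ∑ i, (ε i : ℝ) * y i| ≤ (∑ i, |(ε i : ℝ)|) * δ := by
      rw [hSdef, ← Finset.sum_sub_distrib, Finset.sum_mul]
      refine (Finset.abs_sum_le_sum_abs _ _).trans (Finset.sum_le_sum fun i _ => ?_)
      rw [show (ε i : ℝ) * x i - (ε i : ℝ) * y i = (ε i : ℝ) * (x i - y i) by ring, abs_mul]
      have := hyd i
      have habs : |x i - y i| ≤ δ := by rw [abs_sub_comm]; exact this
      exact mul_le_mul_of_nonneg_left habs (abs_nonneg _)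
    rw [hy0, sub_zero] at hdiff
    have : (∑ i, |(ε i : ℝ)|) * δ ≤ W * δ := by
      apply mul_le_mul_of_nonneg_right _ hδpos.le
      linarith
    have hWδ : W * δ = |S| / 2 := by
      rw [hδdef]
      field_simp
    rw [hWδ] at this
    have := hdiff.trans this
    have habsS : 0 < |S| := abs_pos.2 hS
    linarith

/-- Shrink a finite family of perfect sets to defeat finitely many integer
linear constraints. -/
lemma shrink_many {ι : Type*} [Fintype ι] (D : ι → Set ℝ)
    (hD : ∀ i, Perfect (D i) ∧ (D i).Nonempty) (G : Finset (ι → ℤ))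
    (hG : ∀ ε ∈ G, ε ≠ 0) :
    ∃ D' : ι → Set ℝ,
      (∀ i, Perfect (D' i) ∧ (D' i).Nonempty ∧ D' i ⊆ D i) ∧
      ∀ ε ∈ G, ∀ x : ι → ℝ, (∀ i, x i ∈ D' i) → ∑ i, (ε i : ℝ) * x i ≠ 0 := by
  classical
  induction G using Finset.induction_on generalizing D with
  | empty => exact ⟨D, fun i => ⟨(hD i).1, (hD i).2, subset_rfl⟩, by simp⟩
  | @insert ε G hεG ih =>
    obtain ⟨D₁, hD₁, hD₁G⟩ := ih D hD (fun ε' hε' => hG ε' (Finset.mem_insert_of_mem hε'))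
    obtain ⟨D₂, hD₂, hD₂ε⟩ := shrink_one D₁ (fun i => ⟨(hD₁ i).1, (hD₁ i).2.1⟩) ε
      (hG ε (Finset.mem_insert_self _ _))
    refine ⟨D₂, fun i => ⟨(hD₂ i).1, (hD₂ i).2.1, (hD₂ i).2.2.trans (hD₁ i).2.2⟩, ?_⟩
    intro ε' hε' x hx
    rcases Finset.mem_insert.1 hε' with rfl | hε'
    · exact hD₂ε x hx
    · exact hD₁G ε' hε' x fun i => (hD₂ i).2.2 (hx i)

/-- The invariant carried along the Cantor scheme inside `P`. -/
def Good (P : Set ℝ) (n : ℕ) (C : (Fin n → Bool) → Set ℝ) : Prop :=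
  (∀ s, Perfect (C s) ∧ (C s).Nonempty ∧ C s ⊆ P ∧
    Metric.diam (C s) ≤ (1/2 : ℝ)^n * (Metric.diam P + 1)) ∧
  ∀ ε : (Fin n → Bool) → ℤ, ε ≠ 0 → (∀ s, (ε s).natAbs ≤ n) →
    ∀ x : (Fin n → Bool) → ℝ, (∀ s, ε s ≠ 0 → x s ∈ C s) →
      ∑ s, (ε s : ℝ) * x s ≠ 0

lemma good_zero {P : Set ℝ} (hP : Perfect P) (hPne : P.Nonempty) :
    Good P 0 (fun _ => P) := by
  constructor
  · intro s
    refine ⟨hP, hPne, subset_rfl, ?_⟩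
    simp only [pow_zero, one_mul]
    linarith [Metric.diam_nonneg (s := P)]
  · intro ε hε hb x _
    exfalso
    apply hε
    funext s
    simp only [Pi.zero_apply]
    have := hb s
    omega

lemma good_step {P : Set ℝ} (hPc : IsCompact P) {n : ℕ} {C : (Fin n → Bool) → Set ℝ}
    (h : Good P n C) :
    ∃ C' : (Fin (n+1) → Bool) → Set ℝ, Good P (n+1) C' ∧
      ∀ s, C' s ⊆ C (Fin.init s) := by
  classical
  set M : ℝ := Metric.diam P + 1 with hM
  have hMpos : 0 < M := by
    have := Metric.diam_nonneg (s := P); linarith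
  -- step 1 : split each set in two small perfect pieces
  have hsplit : ∀ t : Fin n → Bool, ∃ pr : Bool → Set ℝ,
      ∀ b, Perfect (pr b) ∧ (pr b).Nonempty ∧ pr b ⊆ C t ∧
        EMetric.diam (pr b) ≤ ENNReal.ofReal ((1/2 : ℝ)^(n+1) * M) := by
    intro t
    obtain ⟨C₀, C₁, h₀, h₁, -⟩ := (h.1 t).1.small_diam_splitting (h.1 t).2.1
      (ε := ENNReal.ofReal ((1/2 : ℝ)^(n+1) * M))
      (ENNReal.ofReal_pos.2 (by positivity))
    refine ⟨fun b => if b then C₁ else C₀, fun b => ?_⟩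
    cases b
    · exact h₀
    · exact h₁
  choose pr hpr using hsplit
  set D : (Fin (n+1) → Bool) → Set ℝ := fun s => pr (Fin.init s) (s (Fin.last n)) with hD
  have hDgood : ∀ s, Perfect (D s) ∧ (D s).Nonempty :=
    fun s => ⟨(hpr _ _).1, (hpr _ _).2.1⟩
  have hDsub : ∀ s, D s ⊆ C (Fin.init s) := fun s => (hpr _ _).2.2.1
  have hDP : ∀ s, D s ⊆ P := fun s => (hDsub s).trans (h.1 _).2.2.1
  have hDdiam : ∀ s, Metric.diam (D s) ≤ (1/2 : ℝ)^(n+1) * M := by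
    intro s
    have := (hpr (Fin.init s) (s (Fin.last n))).2.2.2
    exact ENNReal.toReal_le_of_le_ofReal (by positivity) this
  -- step 2 : the finite family of constraints at level n+1
  set G : Finset ((Fin (n+1) → Bool) → ℤ) :=
    (Fintype.piFinset fun _ : Fin (n+1) → Bool =>
      Finset.Icc (-(n+1) : ℤ) ((n+1) : ℤ)).filter (· ≠ 0) with hG
  have hGne : ∀ ε ∈ G, ε ≠ 0 := by
    intro ε hε
    simp only [hG, Finset.mem_filter] at hε
    exact hε.2
  obtain ⟨D', hsub, hind⟩ := shrink_many D hDgood G hGne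
  refine ⟨D', ⟨?_, ?_⟩, fun s => ((hsub s).2.2).trans (hDsub s)⟩
  · intro s
    refine ⟨(hsub s).1, (hsub s).2.1, ((hsub s).2.2).trans (hDP s), ?_⟩
    exact (Metric.diam_mono (hsub s).2.2 (hPc.isBounded.subset (hDP s))).trans (hDdiam s)
  · intro ε hε hb x hx
    have hεG : ε ∈ G := by
      simp only [hG, Finset.mem_filter, Fintype.mem_piFinset, Finset.mem_Icc]
      refine ⟨fun s => ?_, hε⟩
      have := hb s
      omega
    set x' : (Fin (n+1) → Bool) → ℝ :=
      fun s => if ε s = 0 then ((hsub s).2.1).choose else x s with hx'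
    have hx'mem : ∀ s, x' s ∈ D' s := by
      intro s
      by_cases h0 : ε s = 0
      · simp only [hx', if_pos h0]
        exact ((hsub s).2.1).choose_spec
      · simp only [hx', if_neg h0]
        exact hx s h0
    have hsum : ∑ s, (ε s : ℝ) * x s = ∑ s, (ε s : ℝ) * x' s := by
      refine Finset.sum_congr rfl fun s _ => ?_
      by_cases h0 : ε s = 0
      · simp [h0]
      · simp [hx', if_neg h0]
    rw [hsum]
    exact hind ε hεG x' hx'mem

variable (P : Set ℝ) (hP : Perfect P) (hPc : IsCompact P) (hPne : P.Nonempty)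

/-- The Cantor scheme of perfect subsets of `P`. -/
noncomputable def lvl : (n : ℕ) → {C : (Fin n → Bool) → Set ℝ // Good P n C}
  | 0 => ⟨fun _ => P, good_zero hP hPne⟩
  | n+1 => ⟨(good_step hPc (lvl n).2).choose, (good_step hPc (lvl n).2).choose_spec.1⟩

lemma lvl_sub (n : ℕ) (s : Fin (n+1) → Bool) :
    (lvl P hP hPc hPne (n+1)).1 s ⊆ (lvl P hP hPc hPne n).1 (Fin.init s) :=
  (good_step hPc (lvl P hP hPc hPne n).2).choose_spec.2 s

lemma lvl_zero : (lvl P hP hPc hPne 0).1 = fun _ => P := rfl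

lemma exists_down {m n : ℕ} (h : m ≤ n) (s : Fin n → Bool) :
    ∃ t, (lvl P hP hPc hPne n).1 s ⊆ (lvl P hP hPc hPne m).1 t := by
  induction n with
  | zero =>
    have hm := Nat.le_zero.1 h
    subst hm
    exact ⟨s, subset_rfl⟩
  | succ n ih =>
    rcases Nat.le_succ_iff.1 h with h' | h'
    · obtain ⟨t, ht⟩ := ih h' (Fin.init s)
      exact ⟨t, (lvl_sub P hP hPc hPne n s).trans ht⟩
    · subst h'; exact ⟨s, subset_rfl⟩

/-- All-`false` extension of a node. -/
def extF {n : ℕ} (s : Fin n → Bool) : (k : ℕ) → Fin (n + k) → Bool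
  | 0 => s
  | k+1 => Fin.snoc (extF s k) false

/-- The Cantor set. -/
def KSet : Set ℝ := ⋂ n, ⋃ s : Fin n → Bool, (lvl P hP hPc hPne n).1 s

lemma lvl_isCompact (n : ℕ) (s : Fin n → Bool) :
    IsCompact ((lvl P hP hPc hPne n).1 s) :=
  hPc.of_isClosed_subset ((lvl P hP hPc hPne n).2.1 s).1.closed
    ((lvl P hP hPc hPne n).2.1 s).2.2.1

lemma KSet_meets (n : ℕ) (s : Fin n → Bool) :
    ((lvl P hP hPc hPne n).1 s ∩ KSet P hP hPc hPne).Nonempty := by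
  set A : ℕ → Set ℝ := fun k => (lvl P hP hPc hPne (n+k)).1 (extF s k) with hA
  have hdec : ∀ k, A (k+1) ⊆ A k := by
    intro k
    have := lvl_sub P hP hPc hPne (n+k) (Fin.snoc (extF s k) false)
    rwa [Fin.init_snoc] at this
  have hne : ∀ k, (A k).Nonempty := fun k => ((lvl P hP hPc hPne (n+k)).2.1 _).2.1
  have hcl : ∀ k, IsClosed (A k) := fun k => ((lvl P hP hPc hPne (n+k)).2.1 _).1.closed
  obtain ⟨z, hz⟩ := IsCompact.nonempty_iInter_of_sequence_nonempty_isCompact_isClosed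
    A hdec hne (lvl_isCompact P hP hPc hPne _ _) hcl
  rw [mem_iInter] at hz
  refine ⟨z, hz 0, ?_⟩
  rw [KSet, mem_iInter]
  intro m
  obtain ⟨t, ht⟩ := exists_down P hP hPc hPne (le_add_self (a := m) (b := n)) (extF s m)
  exact mem_iUnion.2 ⟨t, ht (hz m)⟩

lemma KSet_subset_P : KSet P hP hPc hPne ⊆ P := by
  intro x hx
  have := (mem_iInter.1 hx) 0
  rcases mem_iUnion.1 this with ⟨s, hs⟩
  exact hs

lemma node_exists {x : ℝ} (hx : x ∈ KSet P hP hPc hPne) (n : ℕ) :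
    ∃ s, x ∈ (lvl P hP hPc hPne n).1 s :=
  mem_iUnion.1 ((mem_iInter.1 hx) n)

lemma node_unique {x : ℝ} {n : ℕ} {s t : Fin n → Bool}
    (hs : x ∈ (lvl P hP hPc hPne n).1 s) (ht : x ∈ (lvl P hP hPc hPne n).1 t) : s = t := by
  classical
  cases n with
  | zero => exact Subsingleton.elim s t
  | succ n =>
    by_contra hst
    set ε : (Fin (n+1) → Bool) → ℤ :=
      fun u => (if u = s then 1 else 0) - (if u = t then 1 else 0) with hε
    have hεs : ε s = 1 := by simp [hε, hst]
    have hts : ¬ t = s := fun hh => hst hh.symm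
    have hεt : ε t = -1 := by simp [hε, hts]
    refine (lvl P hP hPc hPne (n+1)).2.2 ε ?_ ?_ (fun _ => x) ?_ ?_
    · intro h
      have := congrFun h s
      rw [hεs] at this
      simp at this
    · intro u
      by_cases h1 : u = s <;> by_cases h2 : u = t <;> simp [hε, h1, h2, hts, hst] <;> omega
    · intro u hu
      by_cases h1 : u = s
      · subst h1; exact hs
      by_cases h2 : u = t
      · subst h2; exact ht
      · simp [hε, h1, h2] at hu
    · show (∑ u, (ε u : ℝ) * x) = 0
      have hc : ∀ u, (ε u : ℝ) = (if u = s then (1:ℝ) else 0) - (if u = t then 1 else 0) := by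
        intro u
        simp [hε, apply_ite (fun z : ℤ => (z : ℝ))]
      simp only [hc, sub_mul, Finset.sum_sub_distrib, ite_mul, zero_mul, one_mul,
        Finset.sum_ite_eq', Finset.mem_univ, if_true]
      ring

lemma KSet_nonempty : (KSet P hP hPc hPne).Nonempty := by
  obtain ⟨z, -, hz⟩ := KSet_meets P hP hPc hPne 0 (fun i => i.elim0)
  exact ⟨z, hz⟩

lemma KSet_isCompact : IsCompact (KSet P hP hPc hPne) := by
  apply hPc.of_isClosed_subset _ (KSet_subset_P P hP hPc hPne)
  exact isClosed_iInter fun n => isClosed_iUnion_of_finite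
    fun s => ((lvl P hP hPc hPne n).2.1 s).1.closed

lemma lvl_diam (n : ℕ) (s : Fin n → Bool) :
    Metric.diam ((lvl P hP hPc hPne n).1 s) ≤ (1/2 : ℝ)^n * (Metric.diam P + 1) :=
  ((lvl P hP hPc hPne n).2.1 s).2.2.2

lemma tendsto_bound :
    Filter.Tendsto (fun n : ℕ => (1/2 : ℝ)^n * (Metric.diam P + 1)) atTop (𝓝 0) := by
  have h := (tendsto_pow_atTop_nhds_zero_of_lt_one (by norm_num : (0:ℝ) ≤ 1/2)
    (by norm_num : (1/2 : ℝ) < 1)).mul_const (Metric.diam P + 1)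
  simpa using h

lemma KSet_acc {x : ℝ} (hx : x ∈ KSet P hP hPc hPne) :
    AccPt x (𝓟 (KSet P hP hPc hPne)) := by
  rw [accPt_iff_nhds]
  intro U hU
  obtain ⟨ε, hεpos, hball⟩ := Metric.mem_nhds_iff.1 hU
  obtain ⟨n, hn⟩ := ((tendsto_bound P).eventually (gt_mem_nhds hεpos)).exists
  obtain ⟨s, hs⟩ := node_exists P hP hPc hPne hx (n+1)
  set s' : Fin (n+1) → Bool := Fin.snoc (Fin.init s) (!(s (Fin.last n))) with hs'
  obtain ⟨y, hyL, hyK⟩ := KSet_meets P hP hPc hPne (n+1) s'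
  have hne : s ≠ s' := by
    intro h
    have := congrFun h (Fin.last n)
    rw [hs', Fin.snoc_last] at this
    simp at this
  have hyx : y ≠ x := by
    intro h
    subst h
    exact hne (node_unique P hP hPc hPne hs hyL)
  have hxn : x ∈ (lvl P hP hPc hPne n).1 (Fin.init s) := lvl_sub P hP hPc hPne n s hs
  have hyn : y ∈ (lvl P hP hPc hPne n).1 (Fin.init s) := by
    have := lvl_sub P hP hPc hPne n s' hyL
    rwa [hs', Fin.init_snoc] at this
  have hdist : dist y x < ε := by
    have hb : Bornology.IsBounded ((lvl P hP hPc hPne n).1 (Fin.init s)) :=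
      hPc.isBounded.subset ((lvl P hP hPc hPne n).2.1 _).2.2.1
    calc dist y x ≤ Metric.diam ((lvl P hP hPc hPne n).1 (Fin.init s)) :=
          Metric.dist_le_diam_of_mem hb hyn hxn
      _ ≤ (1/2 : ℝ)^n * (Metric.diam P + 1) := lvl_diam P hP hPc hPne n _
      _ < ε := hn
  exact ⟨y, ⟨hball hdist, hyK⟩, hyx⟩

lemma KSet_linearIndependent :
    LinearIndependent ℚ (fun k : KSet P hP hPc hPne => (k : ℝ)) := by
  classical
  rw [linearIndependent_iff']
  intro u g hsum i hi
  by_contra hgi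
  set s' : Finset ↥(KSet P hP hPc hPne) := u.filter (fun j => g j ≠ 0) with hs'def
  have hi' : i ∈ s' := Finset.mem_filter.2 ⟨hi, hgi⟩
  have hg' : ∀ j ∈ s', g j ≠ 0 := fun j hj => (Finset.mem_filter.1 hj).2
  have hsum' : ∑ j ∈ s', g j • (j : ℝ) = 0 := by
    rw [hs'def, Finset.sum_filter_of_ne]
    · exact hsum
    · intro j _ hne hgj
      exact hne (by rw [hgj, zero_smul])
  -- clear denominators
  set d : ℕ := ∏ j ∈ s', (g j).den with hd
  have hdpos : 0 < d := Finset.prod_pos fun j _ => (g j).pos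
  have hdQ : (d : ℚ) ≠ 0 := Nat.cast_ne_zero.2 hdpos.ne'
  set c : ↥(KSet P hP hPc hPne) → ℤ := fun j => (g j).num * ((d : ℤ) / ((g j).den : ℤ)) with hc
  have hkey : ∀ j ∈ s', (c j : ℚ) = g j * d := by
    intro j hj
    obtain ⟨e, he⟩ : ((g j).den : ℤ) ∣ (d : ℤ) :=
      Int.natCast_dvd_natCast.2 (Finset.dvd_prod_of_mem _ hj)
    have hden0 : ((g j).den : ℤ) ≠ 0 := Int.natCast_ne_zero.2 (g j).den_nz
    have hdiv : (d : ℤ) / ((g j).den : ℤ) = e := by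
      rw [he, Int.mul_ediv_cancel_left _ hden0]
    have hdenQ : ((g j).den : ℚ) ≠ 0 := Nat.cast_ne_zero.2 (g j).den_nz
    have hnum : (g j) * ((g j).den : ℚ) = ((g j).num : ℚ) := by
      have h := div_mul_cancel₀ ((g j).num : ℚ) hdenQ
      rwa [Rat.num_div_den] at h
    have hdQe : (d : ℚ) = ((g j).den : ℚ) * (e : ℚ) := by exact_mod_cast congrArg (Int.cast : ℤ → ℚ) he
    rw [hc]
    push_cast [hdiv]
    rw [hdQe, ← mul_assoc, hnum]
  have hc0 : ∀ j ∈ s', c j ≠ 0 := by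
    intro j hj h0
    have h2 : g j * (d : ℚ) = 0 := by rw [← hkey j hj, h0, Int.cast_zero]
    rcases mul_eq_zero.1 h2 with h | h
    · exact hg' j hj h
    · exact hdQ h
  have hcsum : ∑ j ∈ s', (c j : ℝ) * (j : ℝ) = 0 := by
    have : ∀ j ∈ s', (c j : ℝ) * (j : ℝ) = (d : ℝ) * (g j • (j : ℝ)) := by
      intro j hj
      have h1 : ((c j : ℚ) : ℝ) = ((g j * d : ℚ) : ℝ) := by rw [hkey j hj]
      push_cast at h1
      rw [Rat.smul_def, h1]
      ring
    rw [Finset.sum_congr rfl this, ← Finset.mul_sum, hsum', mul_zero]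
  -- choose a level
  set B : ℕ := s'.sup fun j => (c j).natAbs with hB
  have hev : ∀ j ∈ s', ∀ k ∈ s',
      ∀ᶠ n : ℕ in atTop, j ≠ k →
        (1/2 : ℝ)^n * (Metric.diam P + 1) < dist (j : ℝ) (k : ℝ) := by
    intro j hj k hk
    rcases eq_or_ne j k with rfl | hjk
    · filter_upwards with n hn
      exact absurd rfl hn
    · have hdp : 0 < dist (j : ℝ) (k : ℝ) :=
        dist_pos.2 (fun h => hjk (Subtype.coe_injective h))
      filter_upwards [(tendsto_bound P).eventually (gt_mem_nhds hdp)] with n hn _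
      exact hn
  obtain ⟨n, hsep, hBn⟩ :=
    (((eventually_all_finset s').2 fun j hj => (eventually_all_finset s').2 fun k hk =>
      hev j hj k hk).and (eventually_ge_atTop B)).exists
  -- nodes at level n
  have hndex : ∀ j : ↥(KSet P hP hPc hPne), ∃ t, (j : ℝ) ∈ (lvl P hP hPc hPne n).1 t :=
    fun j => node_exists P hP hPc hPne j.2 n
  choose nd hnd using hndex
  have hndinj : ∀ j ∈ s', ∀ k ∈ s', j ≠ k → nd j ≠ nd k := by
    intro j hj k hk hjk hne
    have hb : Bornology.IsBounded ((lvl P hP hPc hPne n).1 (nd j)) :=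
      hPc.isBounded.subset ((lvl P hP hPc hPne n).2.1 _).2.2.1
    have h1 : dist (j : ℝ) (k : ℝ) ≤ Metric.diam ((lvl P hP hPc hPne n).1 (nd j)) :=
      Metric.dist_le_diam_of_mem hb (hnd j) (by rw [hne]; exact hnd k)
    have h2 := (h1.trans (lvl_diam P hP hPc hPne n (nd j))).trans_lt
      (hsep j hj k hk hjk)
    exact lt_irrefl _ h2
  -- the constraint and the points
  set ε : (Fin n → Bool) → ℤ := fun t => ∑ j ∈ s'.filter (fun j => nd j = t), c j with hε
  set xf : (Fin n → Bool) → ℝ :=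
    fun t => ∑ j ∈ s'.filter (fun j => nd j = t), (j : ℝ) with hxf
  have hfib : ∀ t, (s'.filter (fun j => nd j = t)) = ∅ ∨
      ∃ j, j ∈ s' ∧ nd j = t ∧ (s'.filter (fun j => nd j = t)) = {j} := by
    intro t
    rcases Finset.eq_empty_or_nonempty (s'.filter (fun j => nd j = t)) with h | ⟨j, hj⟩
    · exact Or.inl h
    · obtain ⟨hjs, hjt⟩ := Finset.mem_filter.1 hj
      refine Or.inr ⟨j, hjs, hjt, ?_⟩
      ext k
      simp only [Finset.mem_filter, Finset.mem_singleton]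
      constructor
      · rintro ⟨hks, hkt⟩
        by_contra hkj
        exact hndinj k hks j hjs hkj (hkt.trans hjt.symm)
      · rintro rfl
        exact ⟨hjs, hjt⟩
  have hfibi : (s'.filter (fun j => nd j = nd i)) = {i} := by
    rcases hfib (nd i) with h | ⟨j, hjs, hjt, hf⟩
    · exact absurd (h ▸ (Finset.mem_filter.2 ⟨hi', rfl⟩ : i ∈ s'.filter (fun j => nd j = nd i))) (Finset.notMem_empty i)
    · have : i ∈ ({j} : Finset ↥(KSet P hP hPc hPne)) := hf ▸ Finset.mem_filter.2 ⟨hi', rfl⟩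
      rw [Finset.mem_singleton] at this
      rwa [this] at hf ⊢
  refine (lvl P hP hPc hPne n).2.2 ε ?_ ?_ xf ?_ ?_
  · intro h
    have := congrFun h (nd i)
    rw [hε] at this
    simp only [hfibi, Finset.sum_singleton, Pi.zero_apply] at this
    exact hc0 i hi' this
  · intro t
    rcases hfib t with h | ⟨j, hjs, -, hf⟩
    · simp [hε, h]
    · have : ε t = c j := by rw [hε]; simp [hf]
      rw [this]
      exact le_trans (Finset.le_sup (f := fun j => (c j).natAbs) hjs) hBn
  · intro t hεt
    rcases hfib t with h | ⟨j, hjs, hjt, hf⟩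
    · rw [hε] at hεt
      simp [h] at hεt
    · have : xf t = (j : ℝ) := by rw [hxf]; simp [hf]
      rw [this, ← hjt]
      exact hnd j
  · have hterm : ∀ t, (ε t : ℝ) * xf t =
        ∑ j ∈ s'.filter (fun j => nd j = t), (c j : ℝ) * (j : ℝ) := by
      intro t
      rcases hfib t with h | ⟨j, hjs, hjt, hf⟩
      · simp [hε, hxf, h]
      · simp [hε, hxf, hf]
    rw [Finset.sum_congr rfl fun t _ => hterm t]
    rw [Finset.sum_fiberwise s' nd (fun j => (c j : ℝ) * (j : ℝ))]
    exact hcsum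

lemma KSet_interior_empty : interior (KSet P hP hPc hPne) = ∅ := by
  classical
  rw [eq_empty_iff_forall_notMem]
  intro x hx
  have hK : KSet P hP hPc hPne ∈ 𝓝 x := mem_interior_iff_mem_nhds.1 hx
  obtain ⟨ε, hε, hball⟩ := Metric.mem_nhds_iff.1 hK
  obtain ⟨q1, hq1a, hq1b⟩ := exists_rat_btwn (show x - ε/2 < x by linarith)
  obtain ⟨q2, hq2a, hq2b⟩ := exists_rat_btwn (show x < x + ε/2 by linarith)
  have hm1 : (q1 : ℝ) ∈ KSet P hP hPc hPne := by
    apply hball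
    rw [mem_ball, Real.dist_eq, abs_lt]
    constructor <;> linarith
  have hm2 : (q2 : ℝ) ∈ KSet P hP hPc hPne := by
    apply hball
    rw [mem_ball, Real.dist_eq, abs_lt]
    constructor <;> linarith
  set k1 : ↥(KSet P hP hPc hPne) := ⟨(q1 : ℝ), hm1⟩ with hk1
  set k2 : ↥(KSet P hP hPc hPne) := ⟨(q2 : ℝ), hm2⟩ with hk2
  have hqq : (q1 : ℝ) < (q2 : ℝ) := lt_trans hq1b hq2a
  have hk12 : k1 ≠ k2 := fun h => absurd (congrArg Subtype.val h) (ne_of_lt hqq)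
  set g : ↥(KSet P hP hPc hPne) → ℚ :=
    fun j => if j = k1 then q2 else if j = k2 then -q1 else 0 with hg
  have hgk1 : g k1 = q2 := by simp [hg]
  have hgk2 : g k2 = -q1 := by simp [hg, Ne.symm hk12]
  have hsum : ∑ j ∈ ({k1, k2} : Finset _), g j • (j : ℝ) = 0 := by
    rw [Finset.sum_pair hk12, hgk1, hgk2, Rat.smul_def, Rat.smul_def]
    push_cast
    ring
  have h1 := linearIndependent_iff'.1 (KSet_linearIndependent P hP hPc hPne)
    {k1, k2} g hsum k1 (by simp)
  have h2 := linearIndependent_iff'.1 (KSet_linearIndependent P hP hPc hPne)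
    {k1, k2} g hsum k2 (by simp)
  rw [hgk1] at h1
  rw [hgk2, neg_eq_zero] at h2
  rw [h2] at hq1b
  rw [h1] at hq2a
  simp only [Rat.cast_zero] at hq1b hq2a
  linarith

/-- Stage 3 : every nonempty compact perfect subset of ℝ contains a
ℚ-linearly independent Cantor set. -/
theorem stage3 (P : Set ℝ) (hP : Perfect P) (hPc : IsCompact P) (hPne : P.Nonempty) :
    ∃ K : Set ℝ, K ⊆ P ∧ K.Nonempty ∧ IsCompact K ∧ interior K = ∅ ∧
      (∀ x ∈ K, AccPt x (𝓟 K)) ∧ LinearIndependent ℚ (fun k : K => (k : ℝ)) :=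
  ⟨KSet P hP hPc hPne, KSet_subset_P P hP hPc hPne, KSet_nonempty P hP hPc hPne,
    KSet_isCompact P hP hPc hPne, KSet_interior_empty P hP hPc hPne,
    fun _ hx => KSet_acc P hP hPc hPne hx, KSet_linearIndependent P hP hPc hPne⟩

end Stage3


open Stage3 in
/-- every uncountable analytic subset of `ℝ` contains a
`ℚ`-linearly independent Cantor set. -/
theorem stmt7 (A : Set ℝ) (hA : MeasureTheory.AnalyticSet A) (hunc : ¬ A.Countable) :
    ∃ K : Set ℝ, K ⊆ A ∧ IsCantorSet K ∧ LinearIndependent ℚ (fun k : K => (k : ℝ)) := by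
  obtain ⟨P, hPA, hPc, hP, hPne⟩ := stmt7_stage2 A hA hunc
  obtain ⟨K, hKP, hKne, hKc, hKint, hKacc, hKli⟩ := Stage3.stage3 P hP hPc hPne
  exact ⟨K, hKP.trans hPA, ⟨hKne, hKc, hKint, hKacc⟩, hKli⟩
end

section
/- Let E ⊆ ℝ be a Cantor set, A the set of left endpoints of the bounded connected components of ℝ \ E. Then A ⊆ E, Cl(A) = E, Cl(E \ A) = E, and A has no locally closed points (i.e., A has empty interior in its closure). -/
open Set Filter

/-- The set of left endpoints of the bounded connected components of `ℝ \ E`. -/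
def leftEndpoints (E : Set ℝ) : Set ℝ :=
  {a : ℝ | ∃ b : ℝ, a < b ∧ a ∈ E ∧ b ∈ E ∧ Set.Ioo a b ⊆ Eᶜ}

/-- Gap lemma: if `x z ∈ E`, `x < y < z`, `y ∉ E`, then there is a left endpoint
in `[x, y]`. -/
lemma gap_lemma {E : Set ℝ} (hcl : IsClosed E) {x y z : ℝ}
    (hx : x ∈ E) (hz : z ∈ E) (hy1 : x < y) (hy2 : y < z) (hyE : y ∉ E) :
    ∃ a ∈ leftEndpoints E, x ≤ a ∧ a ≤ y := by
  have hScomp : IsCompact (E ∩ Set.Icc x y) :=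
    isCompact_Icc.inter_left hcl
  have hTcomp : IsCompact (E ∩ Set.Icc y z) :=
    isCompact_Icc.inter_left hcl
  obtain ⟨a, ⟨haE, hax, hay⟩, hgr⟩ :=
    hScomp.exists_isGreatest ⟨x, hx, le_refl x, le_of_lt hy1⟩
  obtain ⟨b, ⟨hbE, hyb, hbz⟩, hls⟩ :=
    hTcomp.exists_isLeast ⟨z, hz, le_of_lt hy2, le_refl z⟩
  have hay' : a < y := lt_of_le_of_ne hay (fun h => hyE (h ▸ haE))
  have hyb' : y < b := lt_of_le_of_ne hyb (fun h => hyE (h.symm ▸ hbE))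
  refine ⟨a, ⟨b, lt_trans hay' hyb', haE, hbE, ?_⟩, hax, le_of_lt hay'⟩
  intro t ⟨hta, htb⟩ htE
  rcases le_or_gt t y with h | h
  · exact absurd (hgr ⟨htE, le_trans hax (le_of_lt hta), h⟩) (not_le.mpr hta)
  · exact absurd (hls ⟨htE, le_of_lt h, le_trans (le_of_lt htb) hbz⟩) (not_le.mpr htb)

/-- In a set with empty interior, every open interval contains a point outside. -/
lemma exists_not_mem_Ioo {E : Set ℝ} (hint : interior E = ∅) {x z : ℝ} (hxz : x < z) :
    ∃ y, x < y ∧ y < z ∧ y ∉ E := by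
  by_contra h
  push_neg at h
  have hsub : Set.Ioo x z ⊆ E := fun t ⟨ht1, ht2⟩ => h t ht1 ht2
  have : Set.Ioo x z ⊆ interior E := isOpen_Ioo.subset_interior_iff.mpr hsub
  rw [hint, Set.subset_empty_iff] at this
  exact (Set.nonempty_Ioo.mpr hxz).ne_empty this

/-- The left endpoints are dense in the Cantor set. -/
lemma dense_leftEndpoints {E : Set ℝ} (hE : IsCantorSet E) :
    E ⊆ closure (leftEndpoints E) := by
  obtain ⟨-, hcomp, hint, hacc⟩ := hE
  have hcl : IsClosed E := hcomp.isClosed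
  intro x hx
  rw [mem_closure_iff]
  intro U hU hxU
  obtain ⟨ε, hε, hball⟩ := Metric.isOpen_iff.mp hU x hxU
  have := accPt_iff_nhds.mp (hacc x hx) (Metric.ball x ε)
    (Metric.ball_mem_nhds x hε)
  obtain ⟨z, ⟨hzball, hzE⟩, hzx⟩ := this
  have hzd : |z - x| < ε := by rw [← Real.dist_eq]; exact hzball
  rw [abs_lt] at hzd
  rcases lt_or_gt_of_ne hzx with h | h
  · -- z < x
    obtain ⟨y, hy1, hy2, hyE⟩ := exists_not_mem_Ioo hint h
    obtain ⟨a, haA, hza, hay⟩ := gap_lemma hcl hzE hx hy1 hy2 hyE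
    refine ⟨a, hball ?_, haA⟩
    rw [Metric.mem_ball, Real.dist_eq, abs_lt]
    constructor <;> linarith
  · -- x < z
    obtain ⟨y, hy1, hy2, hyE⟩ := exists_not_mem_Ioo hint h
    obtain ⟨a, haA, hxa, hay⟩ := gap_lemma hcl hx hzE hy1 hy2 hyE
    refine ⟨a, hball ?_, haA⟩
    rw [Metric.mem_ball, Real.dist_eq, abs_lt]
    constructor <;> linarith

/-- The set of left endpoints is countable. -/
lemma countable_leftEndpoints (E : Set ℝ) : (leftEndpoints E).Countable := by
  have hex : ∀ a : leftEndpoints E, ∃ q : ℚ, ∃ b : ℝ,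
      (a : ℝ) < q ∧ (q : ℝ) < b ∧ Set.Ioo (a : ℝ) b ⊆ Eᶜ := by
    rintro ⟨a, b, hab, haE, hbE, hI⟩
    obtain ⟨q, hq1, hq2⟩ := exists_rat_btwn hab
    exact ⟨q, b, hq1, hq2, hI⟩
  choose f b h1 h2 h3 using hex
  have key : ∀ a1 a2 : leftEndpoints E, f a1 = f a2 → ¬((a1 : ℝ) < a2) := by
    intro a1 a2 hf hlt
    have ha2E : (a2 : ℝ) ∈ E := by
      obtain ⟨b', _, haE, _⟩ := a2.2
      exact haE
    have : (a2 : ℝ) ∈ Set.Ioo (a1 : ℝ) (b a1) := by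
      refine ⟨hlt, ?_⟩
      have := h1 a2
      rw [← hf] at this
      exact lt_trans this (h2 a1)
    exact h3 a1 this ha2E
  have hinj : Function.Injective f := by
    intro a1 a2 hf
    rcases lt_trichotomy (a1 : ℝ) (a2 : ℝ) with h | h | h
    · exact absurd h (key a1 a2 hf)
    · exact Subtype.ext h
    · exact absurd h (key a2 a1 hf.symm)
  have : Countable (leftEndpoints E) := hinj.countable
  exact Set.countable_coe_iff.mp this

lemma not_countable_cantor_space : ¬ Countable (ℕ → Bool) := by
  intro h
  obtain ⟨g, hg⟩ := exists_surjective_nat (ℕ → Bool)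
  obtain ⟨n, hn⟩ := hg (fun k => !(g k k))
  have := congrFun hn n
  simp at this

/-- `E \ leftEndpoints E` is dense in `E`. -/
lemma dense_diff {E : Set ℝ} (hE : IsCantorSet E) :
    E ⊆ closure (E \ leftEndpoints E) := by
  obtain ⟨-, hcomp, -, hacc⟩ := hE
  have hcl : IsClosed E := hcomp.isClosed
  have hperf : Perfect E := ⟨hcl, hacc⟩
  intro x hx
  rw [mem_closure_iff]
  intro U hU hxU
  by_contra hne
  have hsub : U ∩ E ⊆ leftEndpoints E := by
    intro y ⟨hyU, hyE⟩
    by_contra hyA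
    exact hne ⟨y, hyU, hyE, hyA⟩
  obtain ⟨ε, hε, hball⟩ := Metric.isOpen_iff.mp hU x hxU
  set D := closure (Metric.ball x (ε / 2) ∩ E) with hD
  obtain ⟨hDperf, hDne⟩ := hperf.closure_nhds_inter (U := Metric.ball x (ε / 2)) x hx
    (Metric.mem_ball_self (by linarith)) Metric.isOpen_ball
  have hDsub : D ⊆ Metric.closedBall x (ε / 2) ∩ E := by
    apply closure_minimal
    · exact Set.inter_subset_inter_left E Metric.ball_subset_closedBall
    · exact Metric.isClosed_closedBall.inter hcl
  have hDA : D ⊆ leftEndpoints E := by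
    intro y hy
    obtain ⟨hy1, hy2⟩ := hDsub hy
    apply hsub
    refine ⟨hball ?_, hy2⟩
    rw [Metric.mem_ball]
    calc dist y x ≤ ε / 2 := hy1
    _ < ε := by linarith
  have hDcount : D.Countable := (countable_leftEndpoints E).mono hDA
  obtain ⟨f, hfr, -, hfinj⟩ := hDperf.exists_nat_bool_injection hDne
  apply not_countable_cantor_space
  have : Countable D := hDcount.to_subtype
  exact Function.Injective.countable (f := fun s : ℕ → Bool =>
    (⟨f s, hfr (Set.mem_range_self s)⟩ : D))
    (fun s t hst => hfinj (congrArg Subtype.val hst))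

/-- for a Cantor set `E` and `A` the set of left endpoints of the bounded
complementary intervals: `A ⊆ E`, `Cl(A) = E`, `Cl(E \ A) = E`, and `A` has empty interior
in its closure (no locally closed points). -/
theorem stmt9 (E : Set ℝ) (hE : IsCantorSet E) :
    leftEndpoints E ⊆ E ∧
    closure (leftEndpoints E) = E ∧
    closure (E \ leftEndpoints E) = E ∧
    ∀ U : Set ℝ, IsOpen U → U ∩ closure (leftEndpoints E) ⊆ leftEndpoints E →
      U ∩ closure (leftEndpoints E) = ∅ := by
  have hcl : IsClosed E := hE.2.1.isClosed
  have hAE : leftEndpoints E ⊆ E := by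
    rintro a ⟨b, -, haE, -⟩
    exact haE
  have clA : closure (leftEndpoints E) = E :=
    subset_antisymm (closure_minimal hAE hcl) (dense_leftEndpoints hE)
  have clD : closure (E \ leftEndpoints E) = E :=
    subset_antisymm (closure_minimal Set.diff_subset hcl) (dense_diff hE)
  refine ⟨hAE, clA, clD, ?_⟩
  intro U hU hsub
  rw [clA] at hsub ⊢
  rw [Set.eq_empty_iff_forall_notMem]
  rintro x ⟨hxU, hxE⟩
  have : x ∈ closure (E \ leftEndpoints E) := clD.symm.subset hxE
  obtain ⟨y, hyU, hyE, hyA⟩ := mem_closure_iff.mp this U hU hxU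
  exact hyA (hsub ⟨hyU, hyE⟩)
end

section
/- Let (r_k) be positive reals with 2r_{k+1} < r_k, and suppose r_k / ψ_{m+1}(r_{k−1}) → 0 as k → ∞ for every m, where ψ_j is the j-th iterate of ψ(t)=e^{−1/t} near 0. Let E = ⋂ E_k be the associated Cantor set (keeping the two end subintervals of length r_{k+1} in each component of length r_k). Then for every m ∈ ℕ, r · exp_m(N(E,r)) → 0 as r → 0⁺, where exp_m is the m-th iterate of exp and N(E,r) is the covering number by intervals of length r. -/
/-- The function `ψ : [0,∞) → ℝ`, extended by `0` on `(-∞,0]`: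
`ψ(0) = 0`, `ψ(t) = e^{-1/t}` for `0 < t < 1`, `ψ(t) = t - 1 + e^{-1}` for `t ≥ 1`. -/
noncomputable def psi (t : ℝ) : ℝ :=
  if t ≤ 0 then 0 else if t < 1 then Real.exp (-1 / t) else t - 1 + Real.exp (-1)

/-- The left endpoints of the connected components of the `k`-th stage `E_k` of the
construction: at each step, the component `[c, c + r_i]` is replaced by its two end
subintervals `[c, c + r_{i+1}]` and `[c + r_i - r_{i+1}, c + r_i]`. -/
def leftPt (r : ℕ → ℝ) {k : ℕ} (s : Fin k → Bool) : ℝ :=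
  ∑ i : Fin k, (if s i then r i - r (i + 1) else 0)

/-- The `k`-th stage `E_k`: the union of `2^k` closed intervals of length `r k`
(`E_0 = [0,1]` when `r 0 = 1`). -/
def stageE (r : ℕ → ℝ) (k : ℕ) : Set ℝ :=
  ⋃ s : Fin k → Bool, Set.Icc (leftPt r s) (leftPt r s + r k)

/-- The resulting set `E = ⋂ₖ E_k`. -/
def cantorE (r : ℕ → ℝ) : Set ℝ := ⋂ k, stageE r k

/-- The minimal number of closed intervals of length `ρ` needed to cover `A ⊆ ℝ`
(`⊤` if no finite cover exists). -/
noncomputable def coverNum1 (A : Set ℝ) (ρ : ℝ) : ℕ∞ :=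
  sInf {k : ℕ∞ | ∃ s : Finset ℝ, (s.card : ℕ∞) = k ∧ A ⊆ ⋃ c ∈ s, Set.Icc c (c + ρ)}

lemma psi_iter_eq (j : ℕ) : ∀ t : ℝ, 0 < t → t < 1 →
    0 < psi^[j] t ∧ psi^[j] t < 1 ∧ psi^[j] t = (Real.exp^[j] t⁻¹)⁻¹ := by
  induction j with
  | zero => exact fun t h0 h1 => ⟨h0, h1, (inv_inv t).symm⟩
  | succ j ih =>
    intro t h0 h1
    obtain ⟨hu0, hu1, hue⟩ := ih t h0 h1
    set u := psi^[j] t with hu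
    have hpsiu : psi u = Real.exp (-u⁻¹) := by
      unfold psi
      rw [if_neg (not_le.2 hu0), if_pos hu1, neg_div, one_div]
    have hinv : u⁻¹ = Real.exp^[j] t⁻¹ := by rw [hue, inv_inv]
    have h1' : psi^[j+1] t = Real.exp (-u⁻¹) := by
      rw [Function.iterate_succ_apply', ← hu, hpsiu]
    have h2' : Real.exp^[j+1] t⁻¹ = Real.exp u⁻¹ := by
      rw [Function.iterate_succ_apply', hinv]
    refine ⟨h1' ▸ Real.exp_pos _, h1' ▸ Real.exp_lt_one_iff.2 (neg_lt_zero.2 (inv_pos.2 hu0)), ?_⟩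
    rw [h1', h2', Real.exp_neg]

lemma expIter_mono (m : ℕ) : Monotone (Real.exp^[m]) := Real.exp_monotone.iterate m

lemma expIter_nonneg (m : ℕ) {x : ℝ} (hx : 0 ≤ x) : 0 ≤ Real.exp^[m] x := by
  cases m with
  | zero => exact hx
  | succ m => rw [Function.iterate_succ_apply']; exact (Real.exp_pos _).le

lemma expIter_pos (m : ℕ) {x : ℝ} (hx : 0 < x) : 0 < Real.exp^[m] x := by
  cases m with
  | zero => exact hx
  | succ m => rw [Function.iterate_succ_apply']; exact Real.exp_pos _

lemma cover_bound (r : ℕ → ℝ) (n : ℕ) {ρ : ℝ} (h : r n ≤ ρ) :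
    ((coverNum1 (cantorE r) ρ).toNat : ℕ) ≤ 2 ^ n := by
  classical
  set s : Finset ℝ := Finset.image (leftPt r) (Finset.univ : Finset (Fin n → Bool)) with hs
  have hsub : cantorE r ⊆ ⋃ c ∈ s, Set.Icc c (c + ρ) := by
    intro x hx
    have hx' : x ∈ stageE r n := Set.mem_iInter.1 hx n
    rw [stageE, Set.mem_iUnion] at hx'
    obtain ⟨f, hf⟩ := hx'
    exact Set.mem_biUnion (Finset.mem_image_of_mem _ (Finset.mem_univ f))
      ⟨hf.1, hf.2.trans (by linarith)⟩
  have h1 : coverNum1 (cantorE r) ρ ≤ (s.card : ℕ∞) := sInf_le ⟨s, rfl, hsub⟩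
  have h2 : s.card ≤ 2 ^ n := by
    refine Finset.card_image_le.trans ?_
    simp [Finset.card_univ]
  have h3 : coverNum1 (cantorE r) ρ ≤ ((2 ^ n : ℕ) : ℕ∞) :=
    h1.trans (by exact_mod_cast Nat.cast_le.2 h2)
  have := ENat.toNat_le_toNat h3 (ENat.coe_ne_top _)
  rwa [ENat.toNat_coe] at this

lemma nat_add_two_le_two_pow {j : ℕ} (hj : 2 ≤ j) : j + 2 ≤ 2 ^ j := by
  induction j, hj using Nat.le_induction with
  | base => norm_num
  | succ n hn ih => calc n + 1 + 2 ≤ 2 * (n + 2) := by omega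
                    _ ≤ 2 * 2 ^ n := by omega
                    _ = 2 ^ (n + 1) := (pow_succ' 2 n).symm

/-- with the standard construction and the hypothesis
`r_{k+1}/ψ_{m+1}(r_k) → 0` for all `m`, the resulting Cantor set `E` satisfies
`ρ · exp_m(N(E,ρ)) → 0` as `ρ → 0⁺` for every `m`. -/
theorem stmt14 (r : ℕ → ℝ) (h0 : r 0 = 1) (hpos : ∀ k, 0 < r k)
    (hhalf : ∀ k, 2 * r (k + 1) < r k)
    (hfast : ∀ m : ℕ, Filter.Tendsto (fun k => r (k + 1) / psi^[m + 1] (r k))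
      Filter.atTop (nhds 0)) :
    ∀ m : ℕ, Filter.Tendsto
      (fun ρ : ℝ => ρ * Real.exp^[m] (((coverNum1 (cantorE r) ρ).toNat : ℝ)))
      (nhdsWithin 0 (Set.Ioi 0)) (nhds 0) := by
  classical
  intro m
  have hanti : StrictAnti r :=
    strictAnti_nat_of_succ_lt fun k => (lt_two_mul_self (hpos (k+1))).trans (hhalf k)
  have hbound : ∀ k, r k ≤ (2:ℝ)⁻¹ ^ k := by
    intro k
    induction k with
    | zero => simp [h0]
    | succ k ih =>
      have h := hhalf k
      rw [pow_succ]
      nlinarith [hpos (k+1)]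
  have hrk1 : ∀ k, 1 ≤ k → r k < 1 := by
    intro k hk
    calc r k ≤ r 1 := hanti.antitone hk
      _ < r 0 := hanti (by norm_num)
      _ = 1 := h0
  -- key estimate
  rw [Metric.tendsto_nhdsWithin_nhds]
  intro ε hε
  obtain ⟨K, hK⟩ := (Filter.eventually_atTop).1
    ((hfast m).eventually_lt_const hε)
  set K₀ : ℕ := max K 2 with hK₀
  have key : ∀ j, K₀ ≤ j → r (j+1) * Real.exp^[m] ((2:ℝ) ^ (j+2)) < ε := by
    intro j hj
    have hjK : K ≤ j := le_trans (le_max_left _ _) hj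
    have hj2 : 2 ≤ j := le_trans (le_max_right _ _) hj
    have hj0 : 0 < r j := hpos j
    have hj1 : r j < 1 := hrk1 j (by omega)
    obtain ⟨hp0, hp1, hpe⟩ := psi_iter_eq (m+1) (r j) hj0 hj1
    have hEinv : Real.exp^[m+1] (r j)⁻¹ = (psi^[m+1] (r j))⁻¹ := by
      rw [hpe, inv_inv]
    -- (2)^(j+2) ≤ exp ((r j)⁻¹)
    have hrinv : (2:ℝ) ^ j ≤ (r j)⁻¹ := by
      have h1 : ((2:ℝ)⁻¹ ^ j)⁻¹ ≤ (r j)⁻¹ := inv_anti₀ hj0 (hbound j)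
      rwa [← inv_pow, inv_inv] at h1
    have hpow : (2:ℝ) ^ (j+2) ≤ Real.exp ((r j)⁻¹) := by
      have e1 : Real.exp ((2:ℝ) ^ j) = Real.exp 1 ^ (2 ^ j : ℕ) := by
        rw [← Real.exp_nat_mul]
        norm_num
      have e2 : (2:ℝ) ^ (2 ^ j : ℕ) ≤ Real.exp 1 ^ (2 ^ j : ℕ) := by
        apply pow_le_pow_left₀ (by norm_num)
        have := Real.exp_one_gt_d9; linarith
      have e3 : (2:ℝ) ^ (j+2) ≤ (2:ℝ) ^ (2 ^ j : ℕ) :=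
        pow_le_pow_right₀ one_le_two (nat_add_two_le_two_pow hj2)
      calc (2:ℝ) ^ (j+2) ≤ Real.exp ((2:ℝ) ^ j) := by rw [e1]; exact e3.trans e2
        _ ≤ Real.exp ((r j)⁻¹) := Real.exp_le_exp.2 hrinv
    have hchain : Real.exp^[m] ((2:ℝ) ^ (j+2)) ≤ (psi^[m+1] (r j))⁻¹ := by
      rw [← hEinv, Function.iterate_succ_apply]
      exact expIter_mono m hpow
    calc r (j+1) * Real.exp^[m] ((2:ℝ) ^ (j+2))
        ≤ r (j+1) * (psi^[m+1] (r j))⁻¹ :=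
          mul_le_mul_of_nonneg_left hchain (hpos _).le
      _ = r (j+1) / psi^[m+1] (r j) := (div_eq_mul_inv _ _).symm
      _ < ε := hK j hjK
  refine ⟨r (K₀ + 2), hpos _, ?_⟩
  intro ρ hρ hd
  rw [Real.dist_eq, sub_zero, abs_of_pos hρ] at hd
  rw [Real.dist_eq, sub_zero]
  -- find k with r (k+1) ≤ ρ < r k
  have hex : ∃ n, r n ≤ ρ := by
    obtain ⟨n, hn⟩ := exists_pow_lt_of_lt_one hρ (by norm_num : (2:ℝ)⁻¹ < 1)
    exact ⟨n, (hbound n).trans hn.le⟩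
  set n := Nat.find hex with hn
  have hfind : r n ≤ ρ := Nat.find_spec hex
  have hn1 : 1 ≤ n := by
    rcases Nat.eq_zero_or_pos n with h | h
    · exfalso
      have h1 : (1:ℝ) ≤ ρ := by rw [← h0]; simpa [h] using hfind
      have h2 : ρ < 1 := lt_trans hd (hrk1 _ (by omega))
      linarith
    · exact h
  obtain ⟨k, hk⟩ : ∃ k, n = k + 1 := ⟨n - 1, by omega⟩
  have hk1 : r (k+1) ≤ ρ := hk ▸ hfind
  have hk2 : ρ < r k := by
    by_contra h
    exact Nat.find_min hex (by omega : k < n) (not_lt.1 h)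
  have hkK : K₀ + 1 ≤ k := by
    have : r (k+1) < r (K₀ + 2) := lt_of_le_of_lt hk1 hd
    have := hanti.lt_iff_gt.1 this
    omega
  obtain ⟨j, hj⟩ : ∃ j, k = j + 1 := ⟨k - 1, by omega⟩
  have hjK : K₀ ≤ j := by omega
  have hkey := key j hjK
  rw [← hj] at hkey
  -- covering number bound
  have hNle : ((coverNum1 (cantorE r) ρ).toNat : ℝ) ≤ (2:ℝ) ^ (k+1) := by
    have := cover_bound r (k+1) hk1
    exact_mod_cast this
  have hNnn : (0:ℝ) ≤ ((coverNum1 (cantorE r) ρ).toNat : ℝ) := Nat.cast_nonneg _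
  have hexple : Real.exp^[m] (((coverNum1 (cantorE r) ρ).toNat : ℝ))
      ≤ Real.exp^[m] ((2:ℝ) ^ (k+1)) := expIter_mono m hNle
  have hexppos : 0 < Real.exp^[m] ((2:ℝ) ^ (k+1)) := expIter_pos m (by positivity)
  have hfin : ρ * Real.exp^[m] (((coverNum1 (cantorE r) ρ).toNat : ℝ)) < ε := by
    calc ρ * Real.exp^[m] (((coverNum1 (cantorE r) ρ).toNat : ℝ))
        ≤ ρ * Real.exp^[m] ((2:ℝ) ^ (k+1)) :=
          mul_le_mul_of_nonneg_left hexple hρ.le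
      _ < r k * Real.exp^[m] ((2:ℝ) ^ (k+1)) :=
          mul_lt_mul_of_pos_right hk2 hexppos
      _ = r (j+1) * Real.exp^[m] ((2:ℝ) ^ (j+2)) := by rw [hj]
      _ < ε := key j hjK
  rw [abs_of_nonneg (mul_nonneg hρ.le (expIter_nonneg m hNnn))]
  exact hfin
end

section
/- Let D ⊆ ℝⁿ be open, z ∈ Cl(D), and suppose D is locally connected at z (for every open neighborhood U of z there is an open neighborhood V ⊆ U of z with V ∩ D connected). Let g, h : D ∪ {z} → ℝ be continuous with g < h on D and g(z) < h(z), and set C = {(x,t) : x ∈ D, g(x) < t < h(x)}. Then for every r with g(z) < r < h(z), the set C is locally connected at the point (z, r), i.e., every open neighborhood of (z,r) contains an open neighborhood V of (z,r) such that V ∩ C is connected. -/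
/-- if `D ⊆ ℝⁿ` is open, `z ∈ Cl(D)`, `D` is locally connected at `z`,
`g, h` are continuous on `D ∪ {z}` with `g < h` on `D` and `g(z) < h(z)`, and
`C = {(x,t) : x ∈ D, g(x) < t < h(x)}`, then `C` is locally connected at `(z, r)`
for every `g(z) < r < h(z)`. -/
theorem stmt18 (n : ℕ) (D : Set (Fin n → ℝ)) (hD : IsOpen D) (z : Fin n → ℝ)
    (hz : z ∈ closure D)
    (hlc : ∀ U : Set (Fin n → ℝ), IsOpen U → z ∈ U →
      ∃ V : Set (Fin n → ℝ), IsOpen V ∧ z ∈ V ∧ V ⊆ U ∧ IsPreconnected (V ∩ D))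
    (g h : (Fin n → ℝ) → ℝ) (hg : ContinuousOn g (D ∪ {z}))
    (hh : ContinuousOn h (D ∪ {z})) (hgh : ∀ x ∈ D, g x < h x) (hghz : g z < h z)
    (r : ℝ) (hr1 : g z < r) (hr2 : r < h z) :
    ∀ U : Set ((Fin n → ℝ) × ℝ), IsOpen U → (z, r) ∈ U →
      ∃ V : Set ((Fin n → ℝ) × ℝ), IsOpen V ∧ (z, r) ∈ V ∧ V ⊆ U ∧
        IsPreconnected (V ∩ {p : (Fin n → ℝ) × ℝ | p.1 ∈ D ∧ g p.1 < p.2 ∧ p.2 < h p.1}) := by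
  intro U hU hzrU
  -- get a basic box s ×ˢ t inside U
  rcases mem_nhds_prod_iff.1 (hU.mem_nhds hzrU) with ⟨s, hs, t, ht, hst⟩
  rcases Metric.mem_nhds_iff.1 ht with ⟨ε, hε, hball⟩
  set a : ℝ := max (r - ε / 2) ((g z + r) / 2) with ha_def
  set b : ℝ := min (r + ε / 2) ((r + h z) / 2) with hb_def
  have hga : g z < a := lt_max_of_lt_right (by linarith)
  have har : a < r := max_lt (by linarith) (by linarith)
  have hrb : r < b := lt_min (by linarith) (by linarith)
  have hbh : b < h z := min_lt_of_right_lt (by linarith)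
  have hIoo : Set.Ioo a b ⊆ t := by
    refine Set.Subset.trans ?_ hball
    intro x hx
    have h1 : r - ε / 2 ≤ a := le_max_left _ _
    have h2 : b ≤ r + ε / 2 := min_le_left _ _
    simp only [Metric.mem_ball, Real.dist_eq, abs_lt]
    constructor <;> [linarith [hx.1]; linarith [hx.2]]
  -- continuity: find open W with g < a and h > b on W ∩ (D ∪ {z})
  have hgz : ContinuousWithinAt g (D ∪ {z}) z := hg z (Or.inr rfl)
  have hhz : ContinuousWithinAt h (D ∪ {z}) z := hh z (Or.inr rfl)
  have hgW : g ⁻¹' Set.Iio a ∈ nhdsWithin z (D ∪ {z}) := hgz (Iio_mem_nhds hga)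
  have hhW : h ⁻¹' Set.Ioi b ∈ nhdsWithin z (D ∪ {z}) := hhz (Ioi_mem_nhds hbh)
  rcases mem_nhdsWithin.1 (Filter.inter_mem hgW hhW) with ⟨W, hWopen, hzW, hWsub⟩
  -- local connectedness
  rcases mem_nhds_iff.1 hs with ⟨s', hs's, hs'open, hzs'⟩
  rcases hlc (W ∩ s') (hWopen.inter hs'open) ⟨hzW, hzs'⟩ with ⟨V₀, hV₀open, hzV₀, hV₀sub, hV₀conn⟩
  refine ⟨V₀ ×ˢ Set.Ioo a b, hV₀open.prod isOpen_Ioo, ⟨hzV₀, har, hrb⟩, ?_, ?_⟩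
  · intro p hp
    exact hst ⟨hs's (hV₀sub hp.1).2, hIoo hp.2⟩
  · have key : (V₀ ×ˢ Set.Ioo a b) ∩
        {p : (Fin n → ℝ) × ℝ | p.1 ∈ D ∧ g p.1 < p.2 ∧ p.2 < h p.1}
        = (V₀ ∩ D) ×ˢ Set.Ioo a b := by
      ext ⟨x, u⟩
      simp only [Set.mem_inter_iff, Set.mem_prod, Set.mem_Ioo, Set.mem_setOf_eq]
      constructor
      · rintro ⟨⟨hx, hu⟩, hxD, -, -⟩
        exact ⟨⟨hx, hxD⟩, hu⟩
      · rintro ⟨⟨hx, hxD⟩, hu1, hu2⟩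
        have hmem : x ∈ W ∩ (D ∪ {z}) := ⟨(hV₀sub hx).1, Or.inl hxD⟩
        have := hWsub hmem
        exact ⟨⟨hx, hu1, hu2⟩, hxD, lt_trans this.1 hu1, lt_trans hu2 this.2⟩
    rw [key]
    exact hV₀conn.prod isPreconnected_Ioo
end
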